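/- With L_dg as above, the homology of L_dg with respect to the differential ad(d) (i.e., ker(ad(d))/im(ad(d))) is isomorphic as a graded Lie superalgebra to the direct sum of the exterior current algebra sl2(∧) and a 1-dimensional abelian (trivial) Lie superalgebra. -/

import Mathlib

private lemma aux_half_stmt6 {M : Type*} [AddCommGroup M] [Module ℂ M] {t : M}
    (h : t = -t) : t = 0 := by
  have h2 : (2 : ℂ) • t = 0 := by
    rw [two_smul]
    nth_rewrite 1 [h]
    simp
  rcases smul_eq_zero.mp h2 with h' | h'
  · norm_num at h'
  · exact h'

private lemma sum_univ_nine_stmt6 {M : Type*} [AddCommMonoid M] (f : Fin 9 → M) :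
    ∑ i, f i = f 0 + f 1 + f 2 + f 3 + f 4 + f 5 + f 6 + f 7 + f 8 := by
  rw [Fin.sum_univ_castSucc, Fin.sum_univ_eight]
  rfl

set_option maxHeartbeats 1600000 in

/-- Let `L = sl2(∧)_dg` be the 9-dimensional graded Lie superalgebra with
basis `{e, f, h, v₂, v₋₂, ṽ₀, d, D, x}` (written `e f h v2 vm2 v0 d D x`) and super-bracket
`B` with the relations listed in the paper (we record the full bracket table needed:
the listed relations, the derived brackets with `ṽ₀`, and the super-(anti)symmetry of `B`
on the even part `span{e,f,h,x}` and odd part `span{v₂,ṽ₀,v₋₂,d,D}`).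
Let `L'` be the exterior current algebra `sl2(∧)`, with even basis `{e', f', h'}`
(written `e' f' h'`), odd basis `{v₂, v₀, v₋₂}` (written `w2 w0 wm2`), and bracket `B'`.
Then the homology of `L` with respect to `ad d` is isomorphic, as a graded Lie
superalgebra, to `sl2(∧) ⊕ ℂ` (with `ℂ` a trivial 1-dimensional summand): there is a
linear map `π : L → L' × ℂ` which, restricted to `ker(ad d)`, is surjective with kernel
`im(ad d)`, intertwines the brackets (the bracket on `L' × ℂ` being `B'` on the first
factor and zero on the trivial factor), and respects the ℤ/2-grading. -/
theorem stmt_6 (L : Type*) [AddCommGroup L] [Module ℂ L]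
    (B : L →ₗ[ℂ] L →ₗ[ℂ] L)
    (e f h v2 vm2 v0 d D x : L)
    (hbasis : LinearIndependent ℂ ![e, f, h, v2, vm2, v0, d, D, x])
    (hspan : Submodule.span ℂ (Set.range ![e, f, h, v2, vm2, v0, d, D, x]) = ⊤)
    -- sl2 relations
    (h1 : B e f = h) (h2 : B h e = (2 : ℂ) • e) (h3 : B h f = -((2 : ℂ) • f))
    (h4 : B e v2 = 0) (h5 : B f vm2 = 0)
    (h6 : B h v2 = (2 : ℂ) • v2) (h7 : B h vm2 = -((2 : ℂ) • vm2))
    (h8 : B e vm2 = v0) (h9 : B f v2 = -v0)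
    -- `d` and `D` super-commute with `e, f, h, v₂, v₋₂` (and hence with `ṽ₀`)
    (hd1 : B d e = 0) (hd2 : B d f = 0) (hd3 : B d h = 0)
    (hd4 : B d v2 = 0) (hd5 : B d vm2 = 0) (hd6 : B d v0 = 0)
    (hD1 : B D e = 0) (hD2 : B D f = 0) (hD3 : B D h = 0)
    (hD4 : B D v2 = 0) (hD5 : B D vm2 = 0)
    (hdd : B d d = 0) (hDD : B D D = 0)
    (hv2v2 : B v2 v2 = 0) (hvm2vm2 : B vm2 vm2 = 0)
    (hx1 : B v2 vm2 = x) (hx2 : B d D = -x)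
    (hcentral : ∀ y : L, B x y = 0 ∧ B y x = 0)
    -- derived brackets with `ṽ₀ = [e,v₋₂]`
    (g1 : B e v0 = -((2 : ℂ) • v2)) (g2 : B f v0 = (2 : ℂ) • vm2) (g3 : B h v0 = 0)
    (g4 : B v0 v0 = (2 : ℂ) • x) (g5 : B v2 v0 = 0) (g6 : B vm2 v0 = 0)
    -- super-(anti)symmetry of the bracket on even/odd parts
    (gA1 : ∀ a b : L, a ∈ Submodule.span ℂ ({e, f, h, x} : Set L) →
      b ∈ Submodule.span ℂ ({e, f, h, x} : Set L) → B a b = -(B b a))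
    (gA2 : ∀ a ∈ Submodule.span ℂ ({e, f, h, x} : Set L),
      ∀ b ∈ Submodule.span ℂ ({v2, v0, vm2, d, D} : Set L), B b a = -(B a b))
    (gA3 : ∀ a ∈ Submodule.span ℂ ({v2, v0, vm2, d, D} : Set L),
      ∀ b ∈ Submodule.span ℂ ({v2, v0, vm2, d, D} : Set L), B a b = B b a)
    -- a model `L'` of the exterior current algebra sl2(∧)
    (L' : Type*) [AddCommGroup L'] [Module ℂ L']
    (B' : L' →ₗ[ℂ] L' →ₗ[ℂ] L')
    (e' f' h' w2 w0 wm2 : L')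
    (hbasis' : LinearIndependent ℂ ![e', f', h', w2, w0, wm2])
    (hspan' : Submodule.span ℂ (Set.range ![e', f', h', w2, w0, wm2]) = ⊤)
    (k1 : B' e' f' = h') (k2 : B' h' e' = (2 : ℂ) • e') (k3 : B' h' f' = -((2 : ℂ) • f'))
    (k4 : B' e' w2 = 0) (k5 : B' e' w0 = -((2 : ℂ) • w2)) (k6 : B' e' wm2 = w0)
    (k7 : B' f' w2 = -w0) (k8 : B' f' w0 = (2 : ℂ) • wm2) (k9 : B' f' wm2 = 0)
    (k10 : B' h' w2 = (2 : ℂ) • w2) (k11 : B' h' w0 = 0) (k12 : B' h' wm2 = -((2 : ℂ) • wm2))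
    (k13 : ∀ a ∈ Submodule.span ℂ ({w2, w0, wm2} : Set L'),
      ∀ b ∈ Submodule.span ℂ ({w2, w0, wm2} : Set L'), B' a b = 0)
    (kA1 : ∀ a b : L', a ∈ Submodule.span ℂ ({e', f', h'} : Set L') →
      b ∈ Submodule.span ℂ ({e', f', h'} : Set L') → B' a b = -(B' b a))
    (kA2 : ∀ a ∈ Submodule.span ℂ ({e', f', h'} : Set L'),
      ∀ b ∈ Submodule.span ℂ ({w2, w0, wm2} : Set L'), B' b a = -(B' a b)) :
    ∃ π : L →ₗ[ℂ] (L' × ℂ),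
      (∀ y : L' × ℂ, ∃ a ∈ LinearMap.ker (B d), π a = y) ∧
      (∀ a ∈ LinearMap.ker (B d), (π a = 0 ↔ a ∈ LinearMap.range (B d))) ∧
      (∀ a ∈ LinearMap.ker (B d), ∀ b ∈ LinearMap.ker (B d),
        π (B a b) = (B' (π a).1 (π b).1, 0)) ∧
      (∀ a ∈ Submodule.span ℂ ({e, f, h, x} : Set L),
        (π a).1 ∈ Submodule.span ℂ ({e', f', h'} : Set L') ∧ (π a).2 = 0) ∧
      (∀ a ∈ Submodule.span ℂ ({v2, v0, vm2, d, D} : Set L),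
        (π a).1 ∈ Submodule.span ℂ ({w2, w0, wm2} : Set L')) := by
  classical
  let bL : Module.Basis (Fin 9) ℂ L := Module.Basis.mk hbasis hspan.ge
  let bL' : Module.Basis (Fin 6) ℂ L' := Module.Basis.mk hbasis' hspan'.ge
  let π : L →ₗ[ℂ] L' × ℂ := bL.constr ℂ
    ![(e', 0), (f', 0), (h', 0), (w2, 0), (wm2, 0), (w0, 0), ((0 : L'), (1 : ℂ)), 0, 0]
  have hbv : ∀ i, bL i = ![e, f, h, v2, vm2, v0, d, D, x] i := fun i =>
    Module.Basis.mk_apply hbasis hspan.ge i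
  have hbv' : ∀ j, bL' j = ![e', f', h', w2, w0, wm2] j := fun j =>
    Module.Basis.mk_apply hbasis' hspan'.ge j
  have hbL0 : bL 0 = e := hbv 0
  have hbL1 : bL 1 = f := hbv 1
  have hbL2 : bL 2 = h := hbv 2
  have hbL3 : bL 3 = v2 := hbv 3
  have hbL4 : bL 4 = vm2 := hbv 4
  have hbL5 : bL 5 = v0 := hbv 5
  have hbL6 : bL 6 = d := hbv 6
  have hbL7 : bL 7 = D := hbv 7
  have hbL8 : bL 8 = x := hbv 8
  have hbM0 : bL' 0 = e' := hbv' 0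
  have hbM1 : bL' 1 = f' := hbv' 1
  have hbM2 : bL' 2 = h' := hbv' 2
  have hbM3 : bL' 3 = w2 := hbv' 3
  have hbM4 : bL' 4 = w0 := hbv' 4
  have hbM5 : bL' 5 = wm2 := hbv' 5
  have hconstr : ∀ i, π (bL i) =
      ![(e', 0), (f', 0), (h', 0), (w2, 0), (wm2, 0), (w0, 0), ((0 : L'), (1 : ℂ)), 0, 0] i :=
    fun i => Module.Basis.constr_basis bL ℂ _ i
  have hπe : π e = (e', 0) := by rw [← hbL0]; exact hconstr 0
  have hπf : π f = (f', 0) := by rw [← hbL1]; exact hconstr 1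
  have hπh : π h = (h', 0) := by rw [← hbL2]; exact hconstr 2
  have hπv2 : π v2 = (w2, 0) := by rw [← hbL3]; exact hconstr 3
  have hπvm2 : π vm2 = (wm2, 0) := by rw [← hbL4]; exact hconstr 4
  have hπv0 : π v0 = (w0, 0) := by rw [← hbL5]; exact hconstr 5
  have hπd : π d = ((0 : L'), (1 : ℂ)) := by rw [← hbL6]; exact hconstr 6
  have hπD : π D = 0 := by rw [← hbL7]; exact hconstr 7
  have hπx : π x = 0 := by rw [← hbL8]; exact hconstr 8
  have hc1 : ∀ y : L, B x y = 0 := fun y => (hcentral y).1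
  have hc2 : ∀ y : L, B y x = 0 := fun y => (hcentral y).2
  -- memberships
  have me : e ∈ Submodule.span ℂ ({e, f, h, x} : Set L) := Submodule.subset_span (by simp)
  have mf : f ∈ Submodule.span ℂ ({e, f, h, x} : Set L) := Submodule.subset_span (by simp)
  have mh : h ∈ Submodule.span ℂ ({e, f, h, x} : Set L) := Submodule.subset_span (by simp)
  have mv2 : v2 ∈ Submodule.span ℂ ({v2, v0, vm2, d, D} : Set L) :=
    Submodule.subset_span (by simp)
  have mv0 : v0 ∈ Submodule.span ℂ ({v2, v0, vm2, d, D} : Set L) :=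
    Submodule.subset_span (by simp)
  have mvm2 : vm2 ∈ Submodule.span ℂ ({v2, v0, vm2, d, D} : Set L) :=
    Submodule.subset_span (by simp)
  have md : d ∈ Submodule.span ℂ ({v2, v0, vm2, d, D} : Set L) :=
    Submodule.subset_span (by simp)
  have me' : e' ∈ Submodule.span ℂ ({e', f', h'} : Set L') := Submodule.subset_span (by simp)
  have mf' : f' ∈ Submodule.span ℂ ({e', f', h'} : Set L') := Submodule.subset_span (by simp)
  have mh' : h' ∈ Submodule.span ℂ ({e', f', h'} : Set L') := Submodule.subset_span (by simp)
  have mw2 : w2 ∈ Submodule.span ℂ ({w2, w0, wm2} : Set L') := Submodule.subset_span (by simp)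
  have mw0 : w0 ∈ Submodule.span ℂ ({w2, w0, wm2} : Set L') := Submodule.subset_span (by simp)
  have mwm2 : wm2 ∈ Submodule.span ℂ ({w2, w0, wm2} : Set L') := Submodule.subset_span (by simp)
  -- derived brackets in L
  have jee : B e e = 0 := aux_half_stmt6 (gA1 e e me me)
  have jff : B f f = 0 := aux_half_stmt6 (gA1 f f mf mf)
  have jhh : B h h = 0 := aux_half_stmt6 (gA1 h h mh mh)
  have jfe : B f e = -h := by rw [gA1 f e mf me, h1]
  have jeh : B e h = -((2 : ℂ) • e) := by rw [gA1 e h me mh, h2]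
  have jfh : B f h = (2 : ℂ) • f := by rw [gA1 f h mf mh, h3, neg_neg]
  have jv2e : B v2 e = 0 := by rw [gA2 e me v2 mv2, h4, neg_zero]
  have jv2f : B v2 f = v0 := by rw [gA2 f mf v2 mv2, h9, neg_neg]
  have jv2h : B v2 h = -((2 : ℂ) • v2) := by rw [gA2 h mh v2 mv2, h6]
  have jvm2e : B vm2 e = -v0 := by rw [gA2 e me vm2 mvm2, h8]
  have jvm2f : B vm2 f = 0 := by rw [gA2 f mf vm2 mvm2, h5, neg_zero]
  have jvm2h : B vm2 h = (2 : ℂ) • vm2 := by rw [gA2 h mh vm2 mvm2, h7, neg_neg]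
  have jv0e : B v0 e = (2 : ℂ) • v2 := by rw [gA2 e me v0 mv0, g1, neg_neg]
  have jv0f : B v0 f = -((2 : ℂ) • vm2) := by rw [gA2 f mf v0 mv0, g2]
  have jv0h : B v0 h = 0 := by rw [gA2 h mh v0 mv0, g3, neg_zero]
  have jed : B e d = 0 := by
    have hh := gA2 e me d md; rw [hd1] at hh; exact neg_eq_zero.mp hh.symm
  have jfd : B f d = 0 := by
    have hh := gA2 f mf d md; rw [hd2] at hh; exact neg_eq_zero.mp hh.symm
  have jhd : B h d = 0 := by
    have hh := gA2 h mh d md; rw [hd3] at hh; exact neg_eq_zero.mp hh.symm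
  have jvm2v2 : B vm2 v2 = x := (gA3 vm2 mvm2 v2 mv2).trans hx1
  have jv0v2 : B v0 v2 = 0 := (gA3 v0 mv0 v2 mv2).trans g5
  have jv0vm2 : B v0 vm2 = 0 := (gA3 v0 mv0 vm2 mvm2).trans g6
  have jv2d : B v2 d = 0 := (gA3 v2 mv2 d md).trans hd4
  have jvm2d : B vm2 d = 0 := (gA3 vm2 mvm2 d md).trans hd5
  have jv0d : B v0 d = 0 := (gA3 v0 mv0 d md).trans hd6
  -- derived brackets in L'
  have kee : B' e' e' = 0 := aux_half_stmt6 (kA1 e' e' me' me')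
  have kff : B' f' f' = 0 := aux_half_stmt6 (kA1 f' f' mf' mf')
  have khh : B' h' h' = 0 := aux_half_stmt6 (kA1 h' h' mh' mh')
  have kfe : B' f' e' = -h' := by rw [kA1 f' e' mf' me', k1]
  have keh : B' e' h' = -((2 : ℂ) • e') := by rw [kA1 e' h' me' mh', k2]
  have kfh : B' f' h' = (2 : ℂ) • f' := by rw [kA1 f' h' mf' mh', k3, neg_neg]
  have kw2e : B' w2 e' = 0 := by rw [kA2 e' me' w2 mw2, k4, neg_zero]
  have kw2f : B' w2 f' = w0 := by rw [kA2 f' mf' w2 mw2, k7, neg_neg]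
  have kw2h : B' w2 h' = -((2 : ℂ) • w2) := by rw [kA2 h' mh' w2 mw2, k10]
  have kw0e : B' w0 e' = (2 : ℂ) • w2 := by rw [kA2 e' me' w0 mw0, k5, neg_neg]
  have kw0f : B' w0 f' = -((2 : ℂ) • wm2) := by rw [kA2 f' mf' w0 mw0, k8]
  have kw0h : B' w0 h' = 0 := by rw [kA2 h' mh' w0 mw0, k11, neg_zero]
  have kwm2e : B' wm2 e' = -w0 := by rw [kA2 e' me' wm2 mwm2, k6]
  have kwm2f : B' wm2 f' = 0 := by rw [kA2 f' mf' wm2 mwm2, k9, neg_zero]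
  have kwm2h : B' wm2 h' = (2 : ℂ) • wm2 := by rw [kA2 h' mh' wm2 mwm2, k12, neg_neg]
  have kw2w2 : B' w2 w2 = 0 := k13 w2 mw2 w2 mw2
  have kw2w0 : B' w2 w0 = 0 := k13 w2 mw2 w0 mw0
  have kw2wm2 : B' w2 wm2 = 0 := k13 w2 mw2 wm2 mwm2
  have kw0w2 : B' w0 w2 = 0 := k13 w0 mw0 w2 mw2
  have kw0w0 : B' w0 w0 = 0 := k13 w0 mw0 w0 mw0
  have kw0wm2 : B' w0 wm2 = 0 := k13 w0 mw0 wm2 mwm2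
  have kwm2w2 : B' wm2 w2 = 0 := k13 wm2 mwm2 w2 mw2
  have kwm2w0 : B' wm2 w0 = 0 := k13 wm2 mwm2 w0 mw0
  have kwm2wm2 : B' wm2 wm2 = 0 := k13 wm2 mwm2 wm2 mwm2
  -- the differential
  have hBd : ∀ a : L, B d a = -(bL.repr a 7 • x) := by
    intro a
    conv_lhs => rw [← bL.sum_repr a]
    rw [map_sum, sum_univ_nine_stmt6]
    rw [hbL0, hbL1, hbL2, hbL3, hbL4, hbL5, hbL6, hbL7, hbL8]
    simp only [map_smul, hd1, hd2, hd3, hd4, hd5, hd6, hdd, hx2, hc2]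
    simp [smul_neg]
  have hxne : x ≠ 0 := hbasis.ne_zero 8
  have hkermem : ∀ a : L, a ∈ LinearMap.ker (B d) ↔ bL.repr a 7 = 0 := by
    intro a
    rw [LinearMap.mem_ker, hBd a, neg_eq_zero, smul_eq_zero]
    simp [hxne]
  have hrange : ∀ a : L, a ∈ LinearMap.range (B d) ↔ ∃ c : ℂ, a = c • x := by
    intro a
    constructor
    · rintro ⟨b, rfl⟩
      exact ⟨-(bL.repr b 7), by rw [hBd b, neg_smul]⟩
    · rintro ⟨c, rfl⟩
      refine ⟨-(c • D), ?_⟩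
      rw [map_neg, map_smul, hx2]
      simp [smul_neg]
  have hπsum : ∀ a : L, π a = (bL.repr a 0 • e' + bL.repr a 1 • f' + bL.repr a 2 • h' +
      bL.repr a 3 • w2 + bL.repr a 4 • wm2 + bL.repr a 5 • w0, bL.repr a 6) := by
    intro a
    conv_lhs => rw [← bL.sum_repr a]
    rw [map_sum, sum_univ_nine_stmt6]
    rw [hbL0, hbL1, hbL2, hbL3, hbL4, hbL5, hbL6, hbL7, hbL8]
    simp only [map_smul, hπe, hπf, hπh, hπv2, hπvm2, hπv0, hπd, hπD, hπx]
    simp [Prod.ext_iff]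
  have hexpand : ∀ a : L, a = bL.repr a 0 • e + bL.repr a 1 • f + bL.repr a 2 • h +
      bL.repr a 3 • v2 + bL.repr a 4 • vm2 + bL.repr a 5 • v0 + bL.repr a 6 • d +
      bL.repr a 7 • D + bL.repr a 8 • x := by
    intro a
    conv_lhs => rw [← bL.sum_repr a]
    rw [sum_univ_nine_stmt6]
    rw [hbL0, hbL1, hbL2, hbL3, hbL4, hbL5, hbL6, hbL7, hbL8]
  refine ⟨π, ?_, ?_, ?_, ?_, ?_⟩
  · -- surjectivity from the kernel
    rintro ⟨z, cc⟩
    have hz : ∑ j, bL'.repr z j • bL' j = z := bL'.sum_repr z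
    refine ⟨bL'.repr z 0 • e + bL'.repr z 1 • f + bL'.repr z 2 • h + bL'.repr z 3 • v2 +
      bL'.repr z 4 • v0 + bL'.repr z 5 • vm2 + cc • d, ?_, ?_⟩
    · rw [LinearMap.mem_ker]
      simp [map_add, map_smul, hd1, hd2, hd3, hd4, hd5, hd6, hdd]
    · have hπa : π (bL'.repr z 0 • e + bL'.repr z 1 • f + bL'.repr z 2 • h +
          bL'.repr z 3 • v2 + bL'.repr z 4 • v0 + bL'.repr z 5 • vm2 + cc • d) =
          (bL'.repr z 0 • e' + bL'.repr z 1 • f' + bL'.repr z 2 • h' +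
            bL'.repr z 3 • w2 + bL'.repr z 4 • w0 + bL'.repr z 5 • wm2, cc) := by
        simp [map_add, map_smul, hπe, hπf, hπh, hπv2, hπv0, hπvm2, hπd, Prod.ext_iff]
      rw [hπa, Prod.mk.injEq]
      refine ⟨?_, rfl⟩
      conv_rhs => rw [← hz]
      rw [Fin.sum_univ_six]
      rw [hbM0, hbM1, hbM2, hbM3, hbM4, hbM5]
  · -- kernel characterisation
    intro a ha
    constructor
    · intro hpa
      have h7' : bL.repr a 7 = 0 := (hkermem a).mp ha
      have hsum := (hπsum a).symm.trans hpa
      have hs1 : bL.repr a 0 • e' + bL.repr a 1 • f' + bL.repr a 2 • h' +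
          bL.repr a 3 • w2 + bL.repr a 4 • wm2 + bL.repr a 5 • w0 = 0 :=
        congrArg Prod.fst hsum
      have hs2 : bL.repr a 6 = 0 := congrArg Prod.snd hsum
      have hz := Fintype.linearIndependent_iff.mp hbasis'
        ![bL.repr a 0, bL.repr a 1, bL.repr a 2, bL.repr a 3, bL.repr a 5, bL.repr a 4]
        (by
          rw [Fin.sum_univ_six]
          show bL.repr a 0 • e' + bL.repr a 1 • f' + bL.repr a 2 • h' +
            bL.repr a 3 • w2 + bL.repr a 5 • w0 + bL.repr a 4 • wm2 = 0
          calc bL.repr a 0 • e' + bL.repr a 1 • f' + bL.repr a 2 • h' +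
              bL.repr a 3 • w2 + bL.repr a 5 • w0 + bL.repr a 4 • wm2
              = bL.repr a 0 • e' + bL.repr a 1 • f' + bL.repr a 2 • h' +
                bL.repr a 3 • w2 + bL.repr a 4 • wm2 + bL.repr a 5 • w0 := by module
            _ = 0 := hs1)
      have c0 : bL.repr a 0 = 0 := hz 0
      have c1 : bL.repr a 1 = 0 := hz 1
      have c2 : bL.repr a 2 = 0 := hz 2
      have c3 : bL.repr a 3 = 0 := hz 3
      have c5 : bL.repr a 5 = 0 := hz 4
      have c4 : bL.repr a 4 = 0 := hz 5
      rw [hrange]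
      refine ⟨bL.repr a 8, ?_⟩
      conv_lhs => rw [hexpand a]
      rw [c0, c1, c2, c3, c4, c5, hs2, h7']
      simp
    · intro har
      rcases (hrange a).mp har with ⟨c, rfl⟩
      rw [map_smul, hπx, smul_zero]
  · -- bracket condition
    have hK : ∀ a ∈ LinearMap.ker (B d),
        a ∈ Submodule.span ℂ ({e, f, h, v2, vm2, v0, d, x} : Set L) := by
      intro a ha
      have h7' : bL.repr a 7 = 0 := (hkermem a).mp ha
      have ha2 := hexpand a
      rw [h7', zero_smul, add_zero] at ha2
      rw [ha2]
      refine Submodule.add_mem _ (Submodule.add_mem _ (Submodule.add_mem _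
        (Submodule.add_mem _ (Submodule.add_mem _ (Submodule.add_mem _
        (Submodule.add_mem _ ?_ ?_) ?_) ?_) ?_) ?_) ?_) ?_ <;>
        exact Submodule.smul_mem _ _ (Submodule.subset_span (by simp))
    intro a ha b hb
    have ha' := hK a ha
    have hb' := hK b hb
    clear ha hb
    induction ha', hb' using Submodule.span_induction₂ with
    | mem_mem u w hu hw =>
      simp only [Set.mem_insert_iff, Set.mem_singleton_iff] at hu hw
      rcases hu with rfl | rfl | rfl | rfl | rfl | rfl | rfl | rfl <;>
        rcases hw with rfl | rfl | rfl | rfl | rfl | rfl | rfl | rfl <;>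
        (try simp only [h1, h2, h3, h4, h5, h6, h7, h8, h9, hd1, hd2, hd3, hd4, hd5, hd6, hdd,
          hv2v2, hvm2vm2, hx1, g1, g2, g3, g4, g5, g6, jee, jff, jhh, jfe, jeh, jfh,
          jv2e, jv2f, jv2h, jvm2e, jvm2f, jvm2h, jv0e, jv0f, jv0h, jed, jfd, jhd,
          jvm2v2, jv0v2, jv0vm2, jv2d, jvm2d, jv0d, hc1, hc2, map_smul, map_neg, map_zero,
          hπe, hπf, hπh, hπv2, hπvm2, hπv0, hπd, hπx]) <;>
        (try simp only [k1, k2, k3, k4, k5, k6, k7, k8, k9, k10, k11, k12,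
          kee, kff, khh, kfe, keh, kfh, kw2e, kw2f, kw2h, kw0e, kw0f, kw0h,
          kwm2e, kwm2f, kwm2h, kw2w2, kw2w0, kw2wm2, kw0w2, kw0w0, kw0wm2,
          kwm2w2, kwm2w0, kwm2wm2, map_zero, LinearMap.zero_apply, Prod.fst_zero,
          Prod.smul_mk, Prod.neg_mk, smul_zero, neg_zero, map_smul, map_neg,
          LinearMap.smul_apply, LinearMap.neg_apply]) <;>
        simp [Prod.ext_iff]
    | zero_left w hw => simp; rfl
    | zero_right u hu => simp; rfl
    | add_left u₁ u₂ w hu₁ hu₂ hw ih₁ ih₂ =>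
      simp only [map_add, LinearMap.add_apply, ih₁, ih₂, Prod.fst_add, Prod.mk_add_mk,
        add_zero]
    | add_right u w₁ w₂ hu hw₁ hw₂ ih₁ ih₂ =>
      simp only [map_add, LinearMap.add_apply, ih₁, ih₂, Prod.fst_add, Prod.mk_add_mk,
        add_zero]
    | smul_left r u w hu hw ih =>
      simp only [map_smul, LinearMap.smul_apply, ih, Prod.smul_fst, Prod.smul_mk, smul_zero]
    | smul_right r u w hu hw ih =>
      simp only [map_smul, LinearMap.smul_apply, ih, Prod.smul_fst, Prod.smul_mk, smul_zero]
  · -- even grading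
    intro a ha
    have hle : Submodule.span ℂ ({e, f, h, x} : Set L) ≤
        Submodule.comap π ((Submodule.span ℂ ({e', f', h'} : Set L')).prod ⊥) := by
      rw [Submodule.span_le]
      rintro y hy
      simp only [Set.mem_insert_iff, Set.mem_singleton_iff] at hy
      rcases hy with rfl | rfl | rfl | rfl
      · simp only [SetLike.mem_coe, Submodule.mem_comap, hπe, Submodule.mem_prod]
        exact ⟨me', by simp⟩
      · simp only [SetLike.mem_coe, Submodule.mem_comap, hπf, Submodule.mem_prod]
        exact ⟨mf', by simp⟩
      · simp only [SetLike.mem_coe, Submodule.mem_comap, hπh, Submodule.mem_prod]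
        exact ⟨mh', by simp⟩
      · simp only [SetLike.mem_coe, Submodule.mem_comap, hπx, Submodule.mem_prod]
        simp
    have hmem := hle ha
    rw [Submodule.mem_comap, Submodule.mem_prod] at hmem
    exact ⟨hmem.1, by simpa using hmem.2⟩
  · -- odd grading
    intro a ha
    have hle : Submodule.span ℂ ({v2, v0, vm2, d, D} : Set L) ≤
        Submodule.comap π ((Submodule.span ℂ ({w2, w0, wm2} : Set L')).prod ⊤) := by
      rw [Submodule.span_le]
      rintro y hy
      simp only [Set.mem_insert_iff, Set.mem_singleton_iff] at hy
      rcases hy with rfl | rfl | rfl | rfl | rfl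
      · simp only [SetLike.mem_coe, Submodule.mem_comap, hπv2, Submodule.mem_prod]
        exact ⟨mw2, trivial⟩
      · simp only [SetLike.mem_coe, Submodule.mem_comap, hπv0, Submodule.mem_prod]
        exact ⟨mw0, trivial⟩
      · simp only [SetLike.mem_coe, Submodule.mem_comap, hπvm2, Submodule.mem_prod]
        exact ⟨mwm2, trivial⟩
      · simp only [SetLike.mem_coe, Submodule.mem_comap, hπd, Submodule.mem_prod]
        exact ⟨by simp, trivial⟩
      · simp only [SetLike.mem_coe, Submodule.mem_comap, hπD, Submodule.mem_prod]
        exact ⟨by simp, trivial⟩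
    have hmem := hle ha
    rw [Submodule.mem_comap, Submodule.mem_prod] at hmem
    exact hmem.1
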